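/- Let ρ^i_α and C^γ_{αβ} be smooth functions on ℝ^n satisfying the Lie algebroid structure equations, let L : ℝ^k × ℝ^n × ℝ^{mk} → ℝ be smooth, and let (ξ_A)^β_B be smooth functions on ℝ^k × ℝ^n × ℝ^{mk} satisfying at every point, for each α: Σ_A [∂²L/∂t^A∂y^α_A + Σ_{i,β} ρ^i_β · ∂²L/∂q^i∂y^α_A · y^β_A + Σ_{β,γ} C^γ_{αβ} · ∂L/∂y^γ_A · y^β_A + Σ_{B,β} ∂²L/∂y^β_B∂y^α_A · (ξ_A)^β_B] = Σ_i ρ^i_α · ∂L/∂q^i. Let Φ̃(t) = (t, φ^i(t), φ^α_A(t)) be a smooth map satisfying ∂φ^i/∂t^A(t) = Σ_α ρ^i_α(φ(t)) φ^α_A(t) and ∂φ^β_B/∂t^A(t) = (ξ_A)^β_B(Φ̃(t)) for all t. Then Φ̃ solves the Euler–Lagrange field equations on the Lie algebroid: Σ_{A=1}^k ∂/∂t^A[(∂L/∂y^α_A)(Φ̃(t))] = Σ_i ρ^i_α(φ(t)) · (∂L/∂q^i)(Φ̃(t)) − Σ_{A,β,γ} C^γ_{αβ}(φ(t)) · φ^β_A(t)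 · (∂L/∂y^γ_A)(Φ̃(t)) for all α and t. -/

import Mathlib

noncomputable section

/-- `ℝ^k × ℝ^n × ℝ^{mk}`: the local model of `ℝ^k × ⊕^k E` (resp. `ℝ^k × ⊕^k E^*`)
for a rank-`m` Lie algebroid `E` over an `n`-dimensional base. -/
abbrev AlgPhase (k n m : ℕ) : Type :=
  (Fin k → ℝ) × (Fin n → ℝ) × (Fin m → Fin k → ℝ)

/-- Partial derivative `∂f/∂t^A` of a function on `ℝ^k`. -/
def pdR {k : ℕ} (A : Fin k) (f : (Fin k → ℝ) → ℝ) (t : Fin k → ℝ) : ℝ :=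
  fderiv ℝ f t (Pi.single A 1)

/-- Partial derivative `∂f/∂q^i` of a function on `ℝ^n`. -/
def pdn {n : ℕ} (i : Fin n) (f : (Fin n → ℝ) → ℝ) (q : Fin n → ℝ) : ℝ :=
  fderiv ℝ f q (Pi.single i 1)

/-- Partial derivative `∂f/∂t^A` on `AlgPhase`. -/
def pdt {k n m : ℕ} (A : Fin k) (f : AlgPhase k n m → ℝ) (p : AlgPhase k n m) : ℝ :=
  fderiv ℝ f p (Pi.single A 1, 0, 0)

/-- Partial derivative `∂f/∂q^i` on `AlgPhase`. -/
def pdq {k n m : ℕ} (i : Fin n) (f : AlgPhase k n m → ℝ) (p : AlgPhase k n m) : ℝ :=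
  fderiv ℝ f p (0, Pi.single i 1, 0)

/-- Partial derivative with respect to the fibre coordinate with indices `(α, A)`
(`∂f/∂y^α_A`, resp. `∂f/∂y^A_α`). -/
def pdy {k n m : ℕ} (α : Fin m) (A : Fin k) (f : AlgPhase k n m → ℝ)
    (p : AlgPhase k n m) : ℝ :=
  fderiv ℝ f p (0, 0, Pi.single α (Pi.single A 1))

/-- The Lie algebroid structure equations for local anchor components `ρ^i_α` and
structure functions `C^γ_{αβ}` (written `Cf γ α β`) on `ℝ^n`:
the cyclic Jacobi-type identity and the anchor compatibility identity. -/
def StructureEqs {n m : ℕ} (ρ : Fin n → Fin m → (Fin n → ℝ) → ℝ)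
    (Cf : Fin m → Fin m → Fin m → (Fin n → ℝ) → ℝ) : Prop :=
  (∀ (q : Fin n → ℝ) (ν α β γ : Fin m),
      ((∑ i, ρ i α q * pdn i (Cf ν β γ) q) + ∑ μ, Cf ν α μ q * Cf μ β γ q)
      + ((∑ i, ρ i β q * pdn i (Cf ν γ α) q) + ∑ μ, Cf ν β μ q * Cf μ γ α q)
      + ((∑ i, ρ i γ q * pdn i (Cf ν α β) q) + ∑ μ, Cf ν γ μ q * Cf μ α β q) = 0) ∧
  (∀ (q : Fin n → ℝ) (i : Fin n) (α β : Fin m),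
      (∑ j, (ρ j α q * pdn j (ρ i β) q - ρ j β q * pdn j (ρ i α) q))
        = ∑ γ, ρ i γ q * Cf γ α β q)



lemma clm_pi {ι : Type*} [Fintype ι] [DecidableEq ι] (T : (ι → ℝ) →L[ℝ] ℝ) (u : ι → ℝ) :
    T u = ∑ i, u i * T (Pi.single i 1) := by
  conv_lhs => rw [← Finset.univ_sum_single u]
  rw [map_sum]
  refine Finset.sum_congr rfl fun i _ => ?_
  have h : Pi.single i (u i) = u i • (Pi.single i (1:ℝ) : ι → ℝ) := by
    funext j
    by_cases hj : j = i <;> simp [Pi.single_apply, hj]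
  rw [h, map_smul]; simp

lemma clm_pi2 {m k : ℕ} (T : (Fin m → Fin k → ℝ) →L[ℝ] ℝ) (w : Fin m → Fin k → ℝ) :
    T w = ∑ β, ∑ B, w β B * T (Pi.single β (Pi.single B 1)) := by
  conv_lhs => rw [← Finset.univ_sum_single w]
  rw [map_sum]
  refine Finset.sum_congr rfl fun β _ => ?_
  have h : (Pi.single β (w β) : Fin m → Fin k → ℝ)
      = ∑ B, w β B • (Pi.single β (Pi.single B (1:ℝ)) : Fin m → Fin k → ℝ) := by
    funext γ C
    by_cases hγ : γ = β <;>
      simp [Pi.single_apply, hγ, Finset.sum_apply, Finset.sum_ite_eq, mul_comm]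
  rw [h, map_sum]
  refine Finset.sum_congr rfl fun B _ => ?_
  rw [map_smul]; simp

lemma chainRule' {k n m : ℕ} (f : AlgPhase k n m → ℝ) (hf : ContDiff ℝ (⊤:ℕ∞) f)
    (φq : (Fin k → ℝ) → Fin n → ℝ) (φy : (Fin k → ℝ) → Fin m → Fin k → ℝ)
    (hφq : ContDiff ℝ (⊤:ℕ∞) φq) (hφy : ContDiff ℝ (⊤:ℕ∞) φy)
    (A : Fin k) (t : Fin k → ℝ) :
    fderiv ℝ (fun s => f (s, φq s, φy s)) t (Pi.single A 1)
      = fderiv ℝ f (t, φq t, φy t) (Pi.single A 1, 0, 0)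
        + (∑ i, fderiv ℝ (fun s => φq s i) t (Pi.single A 1)
            * fderiv ℝ f (t, φq t, φy t) (0, Pi.single i 1, 0))
        + ∑ β, ∑ B, fderiv ℝ (fun s => φy s β B) t (Pi.single A 1)
            * fderiv ℝ f (t, φq t, φy t) (0, 0, Pi.single β (Pi.single B 1)) := by
  have hq : HasFDerivAt φq (fderiv ℝ φq t) t :=
    ((hφq.differentiable (by simp)) t).hasFDerivAt
  have hy : HasFDerivAt φy (fderiv ℝ φy t) t :=
    ((hφy.differentiable (by simp)) t).hasFDerivAt
  set p : AlgPhase k n m := (t, φq t, φy t) with hp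
  have hfp : HasFDerivAt f (fderiv ℝ f p) p :=
    ((hf.differentiable (by simp)) p).hasFDerivAt
  set G : (Fin k → ℝ) →L[ℝ] AlgPhase k n m :=
    (ContinuousLinearMap.id ℝ (Fin k → ℝ)).prod ((fderiv ℝ φq t).prod (fderiv ℝ φy t)) with hG
  have hg : HasFDerivAt (fun s => ((s, φq s, φy s) : AlgPhase k n m)) G t :=
    HasFDerivAt.prodMk (hasFDerivAt_id t) (hq.prodMk hy)
  have hcomp : HasFDerivAt (fun s => f (s, φq s, φy s))
      ((fderiv ℝ f p).comp G) t := hfp.comp t hg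
  rw [hcomp.fderiv]
  set D := fderiv ℝ f p with hD
  have hqc : ∀ i, fderiv ℝ (fun s => φq s i) t (Pi.single A 1)
      = fderiv ℝ φq t (Pi.single A 1) i := by
    intro i
    have h : HasFDerivAt (fun s => φq s i)
        ((ContinuousLinearMap.proj i).comp (fderiv ℝ φq t)) t :=
      (ContinuousLinearMap.proj (R := ℝ) (φ := fun _ : Fin n => ℝ) i).hasFDerivAt.comp t hq
    rw [h.fderiv]; rfl
  have hyc : ∀ (β : Fin m) (B : Fin k), fderiv ℝ (fun s => φy s β B) t (Pi.single A 1)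
      = fderiv ℝ φy t (Pi.single A 1) β B := by
    intro β B
    have h : HasFDerivAt (fun s => φy s β B)
        ((ContinuousLinearMap.proj B).comp
          ((ContinuousLinearMap.proj β).comp (fderiv ℝ φy t))) t :=
      (ContinuousLinearMap.proj (R := ℝ) (φ := fun _ : Fin k => ℝ) B).hasFDerivAt.comp t
        ((ContinuousLinearMap.proj (R := ℝ) (φ := fun _ : Fin m => Fin k → ℝ) β).hasFDerivAt.comp t hy)
    rw [h.fderiv]; rfl
  simp only [hqc, hyc]
  have hGa : G (Pi.single A 1)
      = (Pi.single A 1, fderiv ℝ φq t (Pi.single A 1), fderiv ℝ φy t (Pi.single A 1)) := rfl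
  have key : ∀ (u : Fin k → ℝ) (v : Fin n → ℝ) (w : Fin m → Fin k → ℝ),
      D (u, v, w) = D (u, 0, 0) + D (0, v, 0) + D (0, 0, w) := by
    intro u v w
    have h1 : ((u, v, w) : AlgPhase k n m) = (u, 0, 0) + (0, v, 0) + (0, 0, w) := by
      simp [Prod.ext_iff]
    rw [h1, map_add, map_add]
  have hv : ∀ v : Fin n → ℝ, D (0, v, 0) = ∑ i, v i * D (0, Pi.single i 1, 0) := by
    intro v
    have := clm_pi (D.comp ((ContinuousLinearMap.inr ℝ (Fin k → ℝ)
        ((Fin n → ℝ) × (Fin m → Fin k → ℝ))).comp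
        (ContinuousLinearMap.inl ℝ (Fin n → ℝ) (Fin m → Fin k → ℝ)))) v
    simpa using this
  have hw : ∀ w : Fin m → Fin k → ℝ,
      D (0, 0, w) = ∑ β, ∑ B, w β B * D (0, 0, Pi.single β (Pi.single B 1)) := by
    intro w
    have := clm_pi2 (D.comp ((ContinuousLinearMap.inr ℝ (Fin k → ℝ)
        ((Fin n → ℝ) × (Fin m → Fin k → ℝ))).comp
        (ContinuousLinearMap.inr ℝ (Fin n → ℝ) (Fin m → Fin k → ℝ)))) w
    simpa using this
  show D (G (Pi.single A 1)) = _
  rw [hGa, key, hv, hw]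

/-- the Euler–Lagrange field equations on a Lie algebroid. If the
coefficients `(ξ_A)^β_B` satisfy the geometric Euler–Lagrange identity and
`Φ̃(t) = (t, φ^i(t), φ^α_A(t))` satisfies `∂φ^i/∂t^A = Σ_α ρ^i_α(φ) φ^α_A` and
`∂φ^β_B/∂t^A = (ξ_A)^β_B ∘ Φ̃`, then `Φ̃` solves the Euler–Lagrange equations on the
algebroid. -/
theorem stmt16 {k n m : ℕ}
    (ρ : Fin n → Fin m → (Fin n → ℝ) → ℝ) (hρ : ∀ i α, ContDiff ℝ (⊤ : ℕ∞) (ρ i α))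
    (Cf : Fin m → Fin m → Fin m → (Fin n → ℝ) → ℝ)
    (hC : ∀ γ α β, ContDiff ℝ (⊤ : ℕ∞) (Cf γ α β))
    (hstr : StructureEqs ρ Cf)
    (L : AlgPhase k n m → ℝ) (hL : ContDiff ℝ (⊤ : ℕ∞) L)
    (ξ : Fin k → Fin m → Fin k → AlgPhase k n m → ℝ)
    (hξs : ∀ A β B, ContDiff ℝ (⊤ : ℕ∞) (ξ A β B))
    (hξ : ∀ (p : AlgPhase k n m) (α : Fin m),
      ∑ A, (pdt A (pdy α A L) p
          + (∑ i, ∑ β, ρ i β p.2.1 * pdq i (pdy α A L) p * p.2.2 β A)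
          + (∑ β, ∑ γ, Cf γ α β p.2.1 * pdy γ A L p * p.2.2 β A)
          + (∑ B, ∑ β, pdy β B (pdy α A L) p * ξ A β B p))
        = ∑ i, ρ i α p.2.1 * pdq i L p)
    (φq : (Fin k → ℝ) → Fin n → ℝ) (φy : (Fin k → ℝ) → Fin m → Fin k → ℝ)
    (hφq : ContDiff ℝ (⊤ : ℕ∞) φq) (hφy : ContDiff ℝ (⊤ : ℕ∞) φy)
    (hmor : ∀ t (i : Fin n) (A : Fin k),
      pdR A (fun s => φq s i) t = ∑ α, ρ i α (φq t) * φy t α A)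
    (hsec : ∀ t (A B : Fin k) (β : Fin m),
      pdR A (fun s => φy s β B) t = ξ A β B (t, φq t, φy t)) :
    ∀ t (α : Fin m),
      ∑ A, pdR A (fun s => pdy α A L (s, φq s, φy s)) t
        = (∑ i, ρ i α (φq t) * pdq i L (t, φq t, φy t))
          - ∑ A, ∑ β, ∑ γ, Cf γ α β (φq t) * φy t β A * pdy γ A L (t, φq t, φy t) := by
  intro t α
  have hpdy : ∀ (α : Fin m) (A : Fin k), ContDiff ℝ (⊤:ℕ∞) (pdy α A L) := by
    intro α A
    have h1 : ContDiff ℝ (⊤:ℕ∞) (fderiv ℝ L) := hL.fderiv_right (mod_cast le_top)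
    exact h1.clm_apply contDiff_const
  have hA : ∀ A : Fin k, pdR A (fun s => pdy α A L (s, φq s, φy s)) t
      = pdt A (pdy α A L) (t, φq t, φy t)
        + (∑ i, pdR A (fun s => φq s i) t * pdq i (pdy α A L) (t, φq t, φy t))
        + ∑ β, ∑ B, pdR A (fun s => φy s β B) t * pdy β B (pdy α A L) (t, φq t, φy t) :=
    fun A => chainRule' (pdy α A L) (hpdy α A) φq φy hφq hφy A t
  have H := hξ (t, φq t, φy t) α
  dsimp only at H
  calc ∑ A, pdR A (fun s => pdy α A L (s, φq s, φy s)) t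
      = ∑ A, ((pdt A (pdy α A L) (t, φq t, φy t)
          + (∑ i, ∑ β, ρ i β (φq t) * pdq i (pdy α A L) (t, φq t, φy t) * φy t β A)
          + (∑ β, ∑ γ, Cf γ α β (φq t) * pdy γ A L (t, φq t, φy t) * φy t β A)
          + (∑ B, ∑ β, pdy β B (pdy α A L) (t, φq t, φy t) * ξ A β B (t, φq t, φy t)))
          - ∑ β, ∑ γ, Cf γ α β (φq t) * φy t β A * pdy γ A L (t, φq t, φy t)) := by
        refine Finset.sum_congr rfl fun A _ => ?_
        rw [hA A]
        simp only [hmor, hsec]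
        have e1 : ∑ i, (∑ β, ρ i β (φq t) * φy t β A) * pdq i (pdy α A L) (t, φq t, φy t)
            = ∑ i, ∑ β, ρ i β (φq t) * pdq i (pdy α A L) (t, φq t, φy t) * φy t β A := by
          refine Finset.sum_congr rfl fun i _ => ?_
          rw [Finset.sum_mul]
          exact Finset.sum_congr rfl fun β _ => by ring
        have e2 : ∑ β, ∑ B, ξ A β B (t, φq t, φy t) * pdy β B (pdy α A L) (t, φq t, φy t)
            = ∑ B, ∑ β, pdy β B (pdy α A L) (t, φq t, φy t) * ξ A β B (t, φq t, φy t) := by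
          rw [Finset.sum_comm]
          exact Finset.sum_congr rfl fun B _ => Finset.sum_congr rfl fun β _ => mul_comm _ _
        have e3 : ∑ β, ∑ γ, Cf γ α β (φq t) * φy t β A * pdy γ A L (t, φq t, φy t)
            = ∑ β, ∑ γ, Cf γ α β (φq t) * pdy γ A L (t, φq t, φy t) * φy t β A :=
          Finset.sum_congr rfl fun β _ => Finset.sum_congr rfl fun γ _ => by ring
        rw [e1, e2, e3]
        ring
    _ = (∑ i, ρ i α (φq t) * pdq i L (t, φq t, φy t))
          - ∑ A, ∑ β, ∑ γ, Cf γ α β (φq t) * φy t β A * pdy γ A L (t, φq t, φy t) := by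
        rw [Finset.sum_sub_distrib, H]
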